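/- Let P(u)^3 denote the cubic polynomial function obtained from the intersection theory: for u in [0,1], P(u) = 2Q̂ + Ê + (4-u)G and for u in [1,4], P(u) = ((7-u)/3)Q̂ + Ê + (4-u)G, computed using the intersection numbers Q̂^3 = -6, Q̂^2·Ê = -6, Q̂·Ê^2 = 18, Ê^3 = -30, Q̂^2·G = 4, Q̂·G^2 = -2, G^3 = 1, G^2·Ê = G·Ê^2 = Q̂·Ê·G = 0. Then (1/22) ∫_0^4 P(u)^3 du = S with A/S = 11/10 where A = 3, i.e. ∫_0^4 P(u)^3 du = 60. -/

import Mathlib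

open MeasureTheory intervalIntegral

/-- Cube of a·Q̂ + b·Ê + c·G expanded with the listed intersection numbers. -/
def cubeQEG (a b c : ℝ) : ℝ :=
  a^3*(-6) + 3*a^2*b*(-6) + 3*a*b^2*18 + b^3*(-30)
    + 3*a^2*c*4 + 3*a*c^2*(-2) + c^3*1
    + 3*b^2*c*0 + 3*b*c^2*0 + 6*a*b*c*0

lemma key_integral :
    (∫ u in (0:ℝ)..4,
        (if u ≤ 1 then cubeQEG 2 1 (4-u) else cubeQEG ((7-u)/3) 1 (4-u))) = 60 := by
  set f : ℝ → ℝ := fun u => if u ≤ 1 then cubeQEG 2 1 (4-u) else cubeQEG ((7-u)/3) 1 (4-u)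
    with hf
  have hg1 : Continuous (fun u : ℝ => 22 - u^3) := by continuity
  have hg2 : Continuous (fun u : ℝ => 208/9 - 4/3*u - 2/3*u^2 - 1/9*u^3) := by continuity
  have e1 : ∀ u ∈ Set.Ioc (0:ℝ) 1, f u = 22 - u^3 := by
    intro u hu
    simp only [hf, if_pos hu.2, cubeQEG]
    ring
  have e2 : ∀ u ∈ Set.Ioc (1:ℝ) 4, f u = 208/9 - 4/3*u - 2/3*u^2 - 1/9*u^3 := by
    intro u hu
    simp only [hf, if_neg (not_le.2 hu.1), cubeQEG]
    ring
  have i1 : IntervalIntegrable f volume 0 1 := by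
    rw [intervalIntegrable_iff_integrableOn_Ioc_of_le (by norm_num)]
    exact (hg1.integrableOn_Ioc).congr_fun (fun u hu => (e1 u hu).symm) measurableSet_Ioc
  have i2 : IntervalIntegrable f volume 1 4 := by
    rw [intervalIntegrable_iff_integrableOn_Ioc_of_le (by norm_num)]
    exact (hg2.integrableOn_Ioc).congr_fun (fun u hu => (e2 u hu).symm) measurableSet_Ioc
  have hsplit := integral_add_adjacent_intervals i1 i2
  rw [← hsplit]
  have h1 : (∫ u in (0:ℝ)..1, f u) = ∫ u in (0:ℝ)..1, (22 - u^3) := by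
    apply intervalIntegral.integral_congr_ae
    filter_upwards with u hu
    exact e1 u (by simpa [Set.uIoc_of_le (by norm_num : (0:ℝ) ≤ 1)] using hu)
  have h2 : (∫ u in (1:ℝ)..4, f u) =
      ∫ u in (1:ℝ)..4, (208/9 - 4/3*u - 2/3*u^2 - 1/9*u^3) := by
    apply intervalIntegral.integral_congr_ae
    filter_upwards with u hu
    exact e2 u (by simpa [Set.uIoc_of_le (by norm_num : (1:ℝ) ≤ 4)] using hu)
  rw [h1, h2]
  have A : (∫ u in (0:ℝ)..1, (22 - u^3)) = 87/4 := by
    rw [integral_sub intervalIntegrable_const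
      ((continuous_pow 3).intervalIntegrable 0 1)]
    simp [integral_pow]
    norm_num
  have B : (∫ u in (1:ℝ)..4, (208/9 - 4/3*u - 2/3*u^2 - 1/9*u^3)) = 153/4 := by
    have : ∀ u : ℝ, HasDerivAt (fun u : ℝ => 208/9*u - 2/3*u^2 - 2/9*u^3 - 1/36*u^4)
        (208/9 - 4/3*u - 2/3*u^2 - 1/9*u^3) u := by
      intro u
      have h := (((hasDerivAt_id u).const_mul (208/9:ℝ)).sub
        (((hasDerivAt_pow 2 u)).const_mul (2/3:ℝ))).sub
        (((hasDerivAt_pow 3 u)).const_mul (2/9:ℝ)) |>.sub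
        (((hasDerivAt_pow 4 u)).const_mul (1/36:ℝ))
      convert h using 1
      · rfl
      · rfl
      · rfl
      · push_cast; ring
    rw [integral_eq_sub_of_hasDerivAt (fun u _ => this u)
      (hg2.intervalIntegrable 1 4)]
    norm_num
  rw [A, B]; norm_num

theorem stmt_5 :
    (∫ u in (0:ℝ)..4,
        (if u ≤ 1 then cubeQEG 2 1 (4-u) else cubeQEG ((7-u)/3) 1 (4-u))) = 60 ∧
    (3 : ℝ) / ((1/22) * ∫ u in (0:ℝ)..4,
        (if u ≤ 1 then cubeQEG 2 1 (4-u) else cubeQEG ((7-u)/3) 1 (4-u))) = 11/10 := by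
  refine ⟨key_integral, ?_⟩
  rw [key_integral]
  norm_num
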